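/- For a monad (T,μ,η) and an endofunctor F on a category C, Kleisli liftings of F to the Kleisli category Kl(T) (endofunctors F̄ on Kl(T) with F̄ ∘ K = K ∘ F, where K : C → Kl(T) is the canonical inclusion) are in bijective correspondence with distributive laws λ : F∘T ⟶ T∘F of the monad T over F (natural transformations compatible with μ and η). -/

import Mathlib

open CategoryTheory

universe v u

/-- A law distributing a monad `(T,μ,η)` over an endofunctor `F`: a natural
transformation `λ : F∘T ⟶ T∘F` (componentwise `F (T X) ⟶ T (F X)`) compatible with
the multiplication and the unit of the monad. -/
structure DistLaw {C : Type u} [Category.{v} C] (T : Monad C) (F : C ⥤ C) where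
  nat : T.toFunctor ⋙ F ⟶ F ⋙ T.toFunctor
  mu_compat : ∀ X : C, F.map (T.μ.app X) ≫ nat.app X =
      nat.app (T.obj X) ≫ T.map (nat.app X) ≫ T.μ.app (F.obj X)
  eta_compat : ∀ X : C, F.map (T.η.app X) ≫ nat.app X = T.η.app (F.obj X)

namespace DistAux

variable {C : Type u} [Category.{v} C] {T : Monad C} {F : C ⥤ C}

/-- An object of `C` seen as an object of the Kleisli category. -/
abbrev ko (X : C) : Kleisli T := Kleisli.mk T X
/-- An object of the Kleisli category seen as an object of `C`. -/
abbrev uo (X : Kleisli T) : C := X.of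
/-- A morphism `X ⟶ T Y` of `C` seen as a Kleisli morphism. -/
def hm {X Y : C} (f : X ⟶ T.obj Y) : ko X ⟶ (ko Y : Kleisli T) := by exact Kleisli.Hom.mk f
/-- The underlying `C`-morphism of a Kleisli morphism. -/
def um {X Y : Kleisli T} (f : X ⟶ Y) : uo X ⟶ T.obj (uo Y) := by exact f.of

@[simp] theorem hm_um {X Y : Kleisli T} (f : X ⟶ Y) : hm (um f) = f := rfl
@[simp] theorem um_hm {X Y : C} (f : X ⟶ T.obj Y) : um (hm f) = f := rfl

theorem kcomp {X Y Z : C} (f : X ⟶ T.obj Y) (g : Y ⟶ T.obj Z) :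
    hm f ≫ hm g = hm (f ≫ T.map g ≫ T.μ.app Z) := rfl

theorem um_comp {X Y Z : Kleisli T} (a : X ⟶ Y) (b : Y ⟶ Z) :
    um (a ≫ b) = um a ≫ T.map (um b) ≫ T.μ.app (uo Z) := rfl

theorem kid (X : C) : 𝟙 (ko X : Kleisli T) = hm (T.η.app X) := rfl

theorem kToKleisli {X Y : C} (f : X ⟶ Y) :
    (Kleisli.Adjunction.toKleisli T).map f = hm (f ≫ T.η.app Y) := rfl

theorem keqToHom {X Y : Kleisli T} (h : X = Y) :
    eqToHom h = hm (eqToHom (show uo X = uo Y from congrArg Kleisli.of h) ≫ T.η.app (uo Y)) := by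
  subst h; simp [← kid]

/-! ### From a distributive law to a Kleisli lifting -/

def liftOfLaw (L : DistLaw T F) : Kleisli T ⥤ Kleisli T where
  obj X := ko (F.obj (uo X))
  map {X Y} f := hm (F.map (um f) ≫ L.nat.app (uo Y))
  map_id X := by
    show hm (F.map (T.η.app (uo X)) ≫ L.nat.app (uo X)) = hm (T.η.app (F.obj (uo X)))
    rw [L.eta_compat (uo X)]
  map_comp {X Y Z} f g := by
    show hm (F.map (um f ≫ T.map (um g) ≫ T.μ.app (uo Z)) ≫ L.nat.app (uo Z)) =
      hm ((F.map (um f) ≫ L.nat.app (uo Y)) ≫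
        T.map (F.map (um g) ≫ L.nat.app (uo Z)) ≫ T.μ.app (F.obj (uo Z)))
    have hnat := L.nat.naturality (um g)
    dsimp at hnat
    congr 1
    simp only [Functor.map_comp, Category.assoc, L.mu_compat (uo Z)]
    rw [reassoc_of% hnat]

theorem liftOfLaw_comm (L : DistLaw T F) :
    Kleisli.Adjunction.toKleisli T ⋙ liftOfLaw L = F ⋙ Kleisli.Adjunction.toKleisli T := by
  refine CategoryTheory.Functor.ext (fun X => rfl) (fun X Y f => ?_)
  simp only [eqToHom_refl, Category.comp_id, Category.id_comp, Functor.comp_map]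
  show hm (F.map (f ≫ T.η.app Y) ≫ L.nat.app Y) = 𝟙 _ ≫ hm (F.map f ≫ T.η.app (F.obj Y)) ≫ 𝟙 _
  rw [Category.id_comp, Category.comp_id]
  congr 1
  rw [Functor.map_comp, Category.assoc, L.eta_compat Y]

/-! ### From a Kleisli lifting to a distributive law -/

theorem eG (G : Kleisli T ⥤ Kleisli T)
    (h : Kleisli.Adjunction.toKleisli T ⋙ G = F ⋙ Kleisli.Adjunction.toKleisli T)
    (X : C) : G.obj (ko X) = (ko (F.obj X) : Kleisli T) :=
  Functor.congr_obj h X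

/-- The `C`-level transport of `G.map`. -/
def gm (G : Kleisli T ⥤ Kleisli T)
    (h : Kleisli.Adjunction.toKleisli T ⋙ G = F ⋙ Kleisli.Adjunction.toKleisli T)
    {X Y : C} (f : X ⟶ T.obj Y) : F.obj X ⟶ T.obj (F.obj Y) :=
  um (eqToHom (eG G h X).symm ≫ G.map (hm f) ≫ eqToHom (eG G h Y))

theorem gm_comp (G : Kleisli T ⥤ Kleisli T)
    (h : Kleisli.Adjunction.toKleisli T ⋙ G = F ⋙ Kleisli.Adjunction.toKleisli T)
    {X Y Z : C} (f : X ⟶ T.obj Y) (g : Y ⟶ T.obj Z) :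
    gm G h (f ≫ T.map g ≫ T.μ.app Z) =
      gm G h f ≫ T.map (gm G h g) ≫ T.μ.app (F.obj Z) := by
  have h1 : (eqToHom (eG G h X).symm ≫ G.map (hm (f ≫ T.map g ≫ T.μ.app Z)) ≫ eqToHom (eG G h Z)) =
      (eqToHom (eG G h X).symm ≫ G.map (hm f) ≫ eqToHom (eG G h Y)) ≫
      (eqToHom (eG G h Y).symm ≫ G.map (hm g) ≫ eqToHom (eG G h Z)) := by
    rw [← kcomp, G.map_comp]
    simp
  rw [gm, h1, um_comp]
  rfl

theorem gm_K (G : Kleisli T ⥤ Kleisli T)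
    (h : Kleisli.Adjunction.toKleisli T ⋙ G = F ⋙ Kleisli.Adjunction.toKleisli T)
    {X Y : C} (g : X ⟶ Y) :
    gm G h (g ≫ T.η.app Y) = F.map g ≫ T.η.app (F.obj Y) := by
  have h2 : G.map (hm (g ≫ T.η.app Y)) =
      eqToHom (eG G h X) ≫ hm (F.map g ≫ T.η.app (F.obj Y)) ≫ eqToHom (eG G h Y).symm :=
    Functor.congr_hom h g
  rw [gm, h2]
  simp only [eqToHom_trans_assoc, eqToHom_refl, Category.id_comp, Category.assoc,
    eqToHom_trans, Category.comp_id]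
  rw [um_hm]

/-- The distributive law component extracted from `G`. -/
def nat0 (G : Kleisli T ⥤ Kleisli T)
    (h : Kleisli.Adjunction.toKleisli T ⋙ G = F ⋙ Kleisli.Adjunction.toKleisli T)
    (X : C) : F.obj (T.obj X) ⟶ T.obj (F.obj X) := gm G h (𝟙 (T.obj X))

theorem gm_eq (G : Kleisli T ⥤ Kleisli T)
    (h : Kleisli.Adjunction.toKleisli T ⋙ G = F ⋙ Kleisli.Adjunction.toKleisli T)
    {X Y : C} (f : X ⟶ T.obj Y) : gm G h f = F.map f ≫ nat0 G h Y := by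
  have hdec : f = (f ≫ T.η.app (T.obj Y)) ≫ T.map (𝟙 (T.obj Y)) ≫ T.μ.app Y := by simp
  rw [nat0]
  conv_lhs => rw [hdec]
  rw [gm_comp, gm_K]
  simp only [Category.assoc]
  rw [← T.η.naturality_assoc (gm G h (𝟙 (T.obj Y)))]
  simp

theorem nat0_natural (G : Kleisli T ⥤ Kleisli T)
    (h : Kleisli.Adjunction.toKleisli T ⋙ G = F ⋙ Kleisli.Adjunction.toKleisli T)
    {A B : C} (f : A ⟶ B) :
    F.map (T.map f) ≫ nat0 G h B = nat0 G h A ≫ T.map (F.map f) := by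
  have hdec : T.map f = 𝟙 (T.obj A) ≫ T.map (f ≫ T.η.app B) ≫ T.μ.app B := by simp
  have h2 : gm G h (𝟙 (T.obj A) ≫ T.map (f ≫ T.η.app B) ≫ T.μ.app B) =
      nat0 G h A ≫ T.map (F.map f) := by
    rw [gm_comp, gm_K, nat0]
    simp
  rw [← hdec, gm_eq] at h2
  exact h2

theorem nat0_eta (G : Kleisli T ⥤ Kleisli T)
    (h : Kleisli.Adjunction.toKleisli T ⋙ G = F ⋙ Kleisli.Adjunction.toKleisli T)
    (X : C) : F.map (T.η.app X) ≫ nat0 G h X = T.η.app (F.obj X) := by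
  have h1 := gm_eq G h (T.η.app X)
  rw [show T.η.app X = 𝟙 X ≫ T.η.app X by simp, gm_K] at h1
  simpa using h1.symm

theorem nat0_mu (G : Kleisli T ⥤ Kleisli T)
    (h : Kleisli.Adjunction.toKleisli T ⋙ G = F ⋙ Kleisli.Adjunction.toKleisli T)
    (X : C) : F.map (T.μ.app X) ≫ nat0 G h X =
    nat0 G h (T.obj X) ≫ T.map (nat0 G h X) ≫ T.μ.app (F.obj X) := by
  have hdec : T.μ.app X = 𝟙 (T.obj (T.obj X)) ≫ T.map (𝟙 (T.obj X)) ≫ T.μ.app X := by simp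
  have h2 : gm G h (𝟙 (T.obj (T.obj X)) ≫ T.map (𝟙 (T.obj X)) ≫ T.μ.app X) =
      nat0 G h (T.obj X) ≫ T.map (nat0 G h X) ≫ T.μ.app (F.obj X) := by
    rw [gm_comp, nat0, nat0]
  rw [← hdec, gm_eq] at h2
  exact h2

def lawOfLift (G : Kleisli T ⥤ Kleisli T)
    (h : Kleisli.Adjunction.toKleisli T ⋙ G = F ⋙ Kleisli.Adjunction.toKleisli T) :
    DistLaw T F where
  nat :=
    { app := fun X => nat0 G h X
      naturality := fun A B f => by
        have := nat0_natural G h f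
        dsimp
        exact this }
  mu_compat := nat0_mu G h
  eta_compat := nat0_eta G h

/-! ### Round trips -/

theorem lift_of_lawOfLift (G : Kleisli T ⥤ Kleisli T)
    (h : Kleisli.Adjunction.toKleisli T ⋙ G = F ⋙ Kleisli.Adjunction.toKleisli T) :
    liftOfLaw (lawOfLift G h) = G := by
  refine CategoryTheory.Functor.ext (fun X => (eG G h (uo X)).symm) (fun X Y f => ?_)
  show hm (F.map (um f) ≫ nat0 G h (uo Y)) = _
  rw [← gm_eq G h (um f), gm, hm_um]
  simp
  rfl

theorem DistLaw.ext' {L1 L2 : DistLaw T F} (hn : L1.nat = L2.nat) : L1 = L2 := by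
  cases L1; cases L2; cases hn; rfl

theorem lawOfLift_liftOfLaw (L : DistLaw T F) :
    lawOfLift (liftOfLaw L) (liftOfLaw_comm L) = L := by
  refine DistLaw.ext' ?_
  ext X
  show nat0 (liftOfLaw L) (liftOfLaw_comm L) X = L.nat.app X
  rw [nat0, gm]
  show um (𝟙 _ ≫ (liftOfLaw L).map (hm (𝟙 (T.obj X))) ≫ 𝟙 _) = L.nat.app X
  rw [Category.id_comp, Category.comp_id]
  show F.map (𝟙 (T.obj X)) ≫ L.nat.app X = L.nat.app X
  simp

end DistAux

/-- Kleisli liftings of `F` along the canonical inclusion `K : C ⥤ Kleisli T`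
are in bijective correspondence with laws distributing the monad `T` over `F`. -/
theorem kleisli_liftings_equiv_distributive_laws
    {C : Type u} [Category.{v} C] (T : Monad C) (F : C ⥤ C) :
    Nonempty
      ({G : Kleisli T ⥤ Kleisli T //
          Kleisli.Adjunction.toKleisli T ⋙ G = F ⋙ Kleisli.Adjunction.toKleisli T} ≃
        DistLaw T F) := by
  exact ⟨{
    toFun := fun G => DistAux.lawOfLift G.1 G.2
    invFun := fun L => ⟨DistAux.liftOfLaw L, DistAux.liftOfLaw_comm L⟩
    left_inv := fun G => Subtype.ext (DistAux.lift_of_lawOfLift G.1 G.2)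
    right_inv := DistAux.lawOfLift_liftOfLaw }⟩
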